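/- arXiv:2505.18868 — 2 statements merged into one kernel-verified Lean document; each statement's English description precedes it below -/
import Mathlib

section
/- Let f ∈ ℂ{x,y} be reduced with gcd(f_x, f_y) = 1. A 1-form ω = A dx + B dy with cofactor h (i.e., A f_y − B f_x = h·f) belongs to F(f) = ℂ{x,y}·df + f·Ω¹ if and only if h ∈ J(f) = ⟨f_x, f_y⟩. -/
open MvPowerSeries

noncomputable section

/-- `ℂ{x,y}`, modeled as formal power series in two variables. -/
abbrev PS := MvPowerSeries (Fin 2) ℂ

/-- Formal partial derivative with respect to variable `i`. -/
noncomputable def pd (i : Fin 2) (f : PS) : PS :=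
  fun m => ((m i : ℂ) + 1) * MvPowerSeries.coeff (m + Finsupp.single i 1) f

/-- The pair `(f_x, f_y)` representing the differential `df = f_x dx + f_y dy`;
a 1-form `A dx + B dy` is modeled as the pair `(A, B)`. -/
noncomputable def dd (f : PS) : PS × PS := (pd 0 f, pd 1 f)

/-- `(A dx + B dy) ∧ (C dx + D dy) = (A D - B C) dx∧dy`, recorded by its coefficient. -/
def wedge (ω η : PS × PS) : PS := ω.1 * η.2 - ω.2 * η.1

/-- The Saito module `S(f)`: 1-forms `ω` with `ω ∧ df = h·f·dx∧dy` for some `h`. -/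
def SaitoSet (f : PS) : Set (PS × PS) := {ω | ∃ h : PS, wedge ω (dd f) = h * f}

/-- `F(f) = ℂ{x,y}·df + f·Ω¹`. -/
def FSet (f : PS) : Set (PS × PS) := {ω | ∃ (p : PS) (η : PS × PS), ω = p • dd f + f • η}

namespace SaitoAux

abbrev Wb : Type := PowerSeries ℂ
abbrev Wt : Type := PowerSeries Wb
abbrev PS' := MvPowerSeries (Fin 2) ℂ

/-- The exponent `(i, j)` as a `Fin 2 →₀ ℕ`. -/
def sIdx (i j : ℕ) : Fin 2 →₀ ℕ := Finsupp.single 0 i + Finsupp.single 1 j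

@[simp] lemma sIdx_zero (i j : ℕ) : sIdx i j 0 = i := by
  simp [sIdx, Finsupp.single_apply]

@[simp] lemma sIdx_one (i j : ℕ) : sIdx i j 1 = j := by
  simp [sIdx, Finsupp.single_apply]

lemma fin2_eq_sIdx (s : Fin 2 →₀ ℕ) : s = sIdx (s 0) (s 1) := by
  ext i
  fin_cases i <;> simp

lemma sIdx_add (a b c d : ℕ) : sIdx a c + sIdx b d = sIdx (a + b) (c + d) := by
  ext i
  fin_cases i <;> simp

/-- From `ℂ⟦x,y⟧` to `ℂ⟦x⟧⟦y⟧`-style iterated power series. -/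
def toT (f : PS') : Wt :=
  PowerSeries.mk fun i => PowerSeries.mk fun j => MvPowerSeries.coeff (sIdx i j) f

def ofT (g : Wt) : PS' :=
  fun s => PowerSeries.coeff (s 1) (PowerSeries.coeff (s 0) g)

lemma coeff_toT (f : PS') (i j : ℕ) :
    PowerSeries.coeff j (PowerSeries.coeff i (toT f)) = MvPowerSeries.coeff (sIdx i j) f := by
  simp [toT]

lemma coeff_ofT (g : Wt) (s : Fin 2 →₀ ℕ) :
    MvPowerSeries.coeff s (ofT g) = PowerSeries.coeff (s 1) (PowerSeries.coeff (s 0) g) := rfl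

lemma toT_add (f g : PS') : toT (f + g) = toT f + toT g := by
  apply PowerSeries.ext; intro i
  apply PowerSeries.ext; intro j
  simp [toT]

lemma toT_mul (f g : PS') : toT (f * g) = toT f * toT g := by
  apply PowerSeries.ext; intro i
  apply PowerSeries.ext; intro j
  rw [coeff_toT, MvPowerSeries.coeff_mul, PowerSeries.coeff_mul, map_sum]
  have inner : ∀ p : ℕ × ℕ,
      PowerSeries.coeff j (PowerSeries.coeff p.1 (toT f) * PowerSeries.coeff p.2 (toT g))
        = ∑ q ∈ Finset.HasAntidiagonal.antidiagonal j,
            MvPowerSeries.coeff (sIdx p.1 q.1) f * MvPowerSeries.coeff (sIdx p.2 q.2) g := by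
    intro p
    rw [PowerSeries.coeff_mul]
    refine Finset.sum_congr rfl fun q _ => ?_
    rw [coeff_toT, coeff_toT]
  simp_rw [inner]
  rw [← Finset.sum_product']
  refine Finset.sum_nbij' (fun uv => ((uv.1 0, uv.2 0), (uv.1 1, uv.2 1)))
    (fun pq => (sIdx pq.1.1 pq.2.1, sIdx pq.1.2 pq.2.2)) ?_ ?_ ?_ ?_ ?_
  · rintro ⟨u, v⟩ huv
    rw [Finset.HasAntidiagonal.mem_antidiagonal] at huv
    simp only [Finset.mem_product, Finset.HasAntidiagonal.mem_antidiagonal]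
    constructor
    · have := congrArg (fun w => w 0) huv
      simpa using this
    · have := congrArg (fun w => w 1) huv
      simpa using this
  · rintro ⟨⟨a, b⟩, ⟨c, d⟩⟩ hm
    simp only [Finset.mem_product, Finset.HasAntidiagonal.mem_antidiagonal] at hm
    rw [Finset.HasAntidiagonal.mem_antidiagonal]
    rw [sIdx_add, hm.1, hm.2]
  · rintro ⟨u, v⟩ _
    simp only [Prod.mk.injEq]
    exact ⟨(fin2_eq_sIdx u).symm, (fin2_eq_sIdx v).symm⟩
  · rintro ⟨⟨a, b⟩, ⟨c, d⟩⟩ _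
    simp
  · rintro ⟨u, v⟩ _
    simp only
    rw [← fin2_eq_sIdx u, ← fin2_eq_sIdx v]

/-- The iso `ℂ⟦x,y⟧ ≃+* ℂ⟦x⟧⟦y⟧` (iterated one-variable power series). -/
def Phi : PS' ≃+* Wt :=
  { toFun := toT
    invFun := ofT
    left_inv := fun f => by
      apply MvPowerSeries.ext; intro s
      rw [coeff_ofT, coeff_toT, ← fin2_eq_sIdx]
    right_inv := fun g => by
      apply PowerSeries.ext; intro i
      apply PowerSeries.ext; intro j
      rw [coeff_toT, coeff_ofT, sIdx_zero, sIdx_one]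
    map_mul' := toT_mul
    map_add' := toT_add }

end SaitoAux


namespace SaitoAux

/-! ### Weierstrass-type division in `Wt = ℂ⟦X⟧⟦Y⟧` (outer variable `X`, inner `Y`). -/

/-- `r` has all inner-variable coefficients of index `≥ n` equal to zero. -/
def LowDeg (n : ℕ) (r : Wt) : Prop :=
  ∀ i m, n ≤ m → PowerSeries.coeff m (PowerSeries.coeff i r) = 0

/-- Drop the first `n` coefficients of a one-variable series. -/
def Ydrop (n : ℕ) (s : Wb) : Wb := PowerSeries.mk fun m => PowerSeries.coeff (m + n) s

lemma Ydrop_spec (n : ℕ) (s : Wb) (m : ℕ) (hm : n ≤ m) :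
    PowerSeries.coeff m (Ydrop n s * PowerSeries.X ^ n) = PowerSeries.coeff m s := by
  rw [PowerSeries.coeff_mul_X_pow', if_pos hm, Ydrop, PowerSeries.coeff_mk,
    Nat.sub_add_cancel hm]

/-- Division (with remainder of degree `< n`) by `X^n * u` in `ℂ⟦X⟧`. -/
def hdiv (n : ℕ) (u : Wbˣ) (s : Wb) : Wb := Ydrop n s * (↑u⁻¹ : Wb)

lemma hdiv_mul (n : ℕ) (u : Wbˣ) (s : Wb) :
    hdiv n u s * (PowerSeries.X ^ n * (u : Wb)) = Ydrop n s * PowerSeries.X ^ n := by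
  rw [hdiv, show Ydrop n s * (↑u⁻¹ : Wb) * (PowerSeries.X ^ n * (u : Wb))
      = Ydrop n s * PowerSeries.X ^ n * ((↑u⁻¹ : Wb) * (u : Wb)) from by ring]
  rw [Units.inv_mul, mul_one]

lemma sub_hdiv (n : ℕ) (u : Wbˣ) (s : Wb) (m : ℕ) (hm : n ≤ m) :
    PowerSeries.coeff m (s - hdiv n u s * (PowerSeries.X ^ n * (u : Wb))) = 0 := by
  rw [map_sub, hdiv_mul, Ydrop_spec n s m hm, sub_self]

/-- Quotient coefficients for Weierstrass division of `g` by `a`,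
where `a` has zeroth (outer) coefficient `X^n * u`. -/
def qf (a : Wt) (n : ℕ) (u : Wbˣ) (g : Wt) : ℕ → Wb
  | i => hdiv n u (PowerSeries.coeff i g -
      ∑ j ∈ (Finset.range i).attach, qf a n u g j.1 * PowerSeries.coeff (i - j.1) a)
  termination_by i => i
  decreasing_by exact Finset.mem_range.mp j.2

lemma qf_eq (a : Wt) (n : ℕ) (u : Wbˣ) (g : Wt) (i : ℕ) :
    qf a n u g i = hdiv n u (PowerSeries.coeff i g -
      ∑ j ∈ Finset.range i, qf a n u g j * PowerSeries.coeff (i - j) a) := by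
  rw [qf]
  rw [Finset.sum_attach (Finset.range i)
    (fun j => qf a n u g j * PowerSeries.coeff (i - j) a)]

/-- The quotient in Weierstrass division. -/
def wq (a : Wt) (n : ℕ) (u : Wbˣ) (g : Wt) : Wt := PowerSeries.mk (qf a n u g)

lemma coeff_wq_mul (a : Wt) (n : ℕ) (u : Wbˣ) (g : Wt) (i : ℕ) :
    PowerSeries.coeff i (wq a n u g * a)
      = (∑ j ∈ Finset.range i, qf a n u g j * PowerSeries.coeff (i - j) a)
        + qf a n u g i * PowerSeries.coeff 0 a := by
  rw [PowerSeries.coeff_mul, Finset.Nat.sum_antidiagonal_eq_sum_range_succ_mk,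
    Finset.sum_range_succ]
  simp [wq, Nat.sub_self]

theorem wdt_ex {a : Wt} {n : ℕ} {u : Wbˣ}
    (ha : PowerSeries.coeff 0 a = PowerSeries.X ^ n * (u : Wb)) (g : Wt) :
    ∃ q r : Wt, g = q * a + r ∧ LowDeg n r := by
  refine ⟨wq a n u g, g - wq a n u g * a, by ring, ?_⟩
  intro i m hm
  have e1 : PowerSeries.coeff i (g - wq a n u g * a)
      = (PowerSeries.coeff i g -
          ∑ j ∈ Finset.range i, qf a n u g j * PowerSeries.coeff (i - j) a)
        - hdiv n u (PowerSeries.coeff i g -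
          ∑ j ∈ Finset.range i, qf a n u g j * PowerSeries.coeff (i - j) a)
          * (PowerSeries.X ^ n * (u : Wb)) := by
    rw [map_sub, coeff_wq_mul, ha, qf_eq a n u g i]
    ring
  rw [e1]
  exact sub_hdiv n u _ m hm

theorem wdt_unique {a : Wt} {n : ℕ} {u : Wbˣ}
    (ha : PowerSeries.coeff 0 a = PowerSeries.X ^ n * (u : Wb))
    (q r : Wt) (h : q * a + r = 0) (hr : LowDeg n r) : q = 0 ∧ r = 0 := by
  have hq : ∀ i, PowerSeries.coeff i q = 0 := by
    intro i
    induction i using Nat.strong_induction_on with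
    | _ i IH =>
      have h1 : PowerSeries.coeff i (q * a) + PowerSeries.coeff i r = 0 := by
        rw [← map_add, h, map_zero]
      have h2 : PowerSeries.coeff i (q * a)
          = PowerSeries.coeff i q * PowerSeries.coeff 0 a := by
        rw [PowerSeries.coeff_mul, Finset.Nat.sum_antidiagonal_eq_sum_range_succ_mk,
          Finset.sum_range_succ]
        rw [Finset.sum_eq_zero fun k hk => by
          rw [IH k (Finset.mem_range.mp hk), zero_mul]]
        rw [zero_add, Nat.sub_self]
      have h3 : PowerSeries.coeff i q * (PowerSeries.X ^ n * (u : Wb))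
          = - PowerSeries.coeff i r := by
        rw [← ha]
        linear_combination h1 - h2
      have h4 : PowerSeries.coeff i q * (↑u : Wb) = 0 := by
        apply PowerSeries.ext
        intro m
        have e2 : PowerSeries.coeff (m + n)
            (PowerSeries.coeff i q * (↑u : Wb) * PowerSeries.X ^ n) =
            PowerSeries.coeff m (PowerSeries.coeff i q * (↑u : Wb)) :=
          PowerSeries.coeff_mul_X_pow _ _ _
        rw [map_zero, ← e2, show PowerSeries.coeff i q * (↑u : Wb) * PowerSeries.X ^ n
          = PowerSeries.coeff i q * (PowerSeries.X ^ n * (u : Wb)) from by ring, h3, map_neg,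
          hr i (m + n) (Nat.le_add_left n m), neg_zero]
      rcases mul_eq_zero.mp h4 with h5 | h5
      · exact h5
      · exact absurd h5 u.ne_zero
  have hq0 : q = 0 := PowerSeries.ext hq
  refine ⟨hq0, ?_⟩
  rw [hq0, zero_mul, zero_add] at h
  exact h

theorem eq_zero_of_dvd_lowdeg {a : Wt} {n : ℕ} {u : Wbˣ}
    (ha : PowerSeries.coeff 0 a = PowerSeries.X ^ n * (u : Wb))
    (g : Wt) (hd : a ∣ g) (hg : LowDeg n g) : g = 0 := by
  obtain ⟨t, ht⟩ := hd
  have h0 : t * a + (-g) = 0 := by rw [ht]; ring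
  have := wdt_unique ha t (-g) h0 (fun i m hm => by
    rw [map_neg, map_neg, hg i m hm, neg_zero])
  have h2 := this.2
  simpa [neg_eq_zero] using h2

theorem dvd_of_dvd_mul_X {a : Wt} {n : ℕ} {u : Wbˣ}
    (ha : PowerSeries.coeff 0 a = PowerSeries.X ^ n * (u : Wb))
    (w : Wt) (hd : a ∣ w * PowerSeries.X) : a ∣ w := by
  obtain ⟨q, r, hw, hr⟩ := wdt_ex ha w
  have hrX : a ∣ r * PowerSeries.X := by
    have e : r * PowerSeries.X = w * PowerSeries.X - q * PowerSeries.X * a := by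
      rw [hw]; ring
    rw [e]
    exact dvd_sub hd (Dvd.intro_left _ rfl)
  have hlow : LowDeg n (r * PowerSeries.X) := by
    intro i m hm
    rw [show (PowerSeries.X : Wt) = PowerSeries.X ^ 1 from (pow_one _).symm,
      PowerSeries.coeff_mul_X_pow']
    split_ifs with h1
    · exact hr (i - 1) m hm
    · rw [map_zero]
  have hzero : r * PowerSeries.X = 0 := eq_zero_of_dvd_lowdeg ha _ hrX hlow
  have hr0 : r = 0 := by
    rcases mul_eq_zero.mp hzero with h1 | h1
    · exact h1
    · exact absurd h1 PowerSeries.X_ne_zero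
  exact ⟨q, by rw [hw, hr0, add_zero, mul_comm]⟩

theorem dvd_of_dvd_mul_X_pow {a : Wt} {n : ℕ} {u : Wbˣ}
    (ha : PowerSeries.coeff 0 a = PowerSeries.X ^ n * (u : Wb))
    (w : Wt) (k : ℕ) (hd : a ∣ w * PowerSeries.X ^ k) : a ∣ w := by
  induction k with
  | zero => simpa using hd
  | succ k IHk =>
    apply IHk
    apply dvd_of_dvd_mul_X ha
    rw [show w * PowerSeries.X ^ k * PowerSeries.X = w * PowerSeries.X ^ (k + 1) from by ring]
    exact hd

end SaitoAux


namespace SaitoAux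

/-- Decomposition of a nonzero one-variable series over a field: `b = X^m * w` with `w` a unit. -/
lemma Wb_decomp (b : Wb) (hb : b ≠ 0) :
    ∃ (m : ℕ) (w : Wbˣ), b = PowerSeries.X ^ m * (w : Wb) ∧
      PowerSeries.coeff m b ≠ 0 := by
  refine ⟨b.order.lift (PowerSeries.order_finite_iff_ne_zero.mpr hb),
    PowerSeries.Unit_of_divided_by_X_pow_order b, ?_, ?_⟩
  · rw [PowerSeries.Unit_of_divided_by_X_pow_order_nonzero hb]
    rw [ENat.lift_eq_toNat_of_lt_top]; exact PowerSeries.X_pow_order_mul_divXPowOrder.symm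
  · rw [ENat.lift_eq_toNat_of_lt_top]; exact PowerSeries.coeff_order hb

/-- Factoring out the largest power of the (outer) variable. -/
lemma Wt_decomp (t : Wt) (ht : t ≠ 0) :
    ∃ (k : ℕ) (t' : Wt), t = PowerSeries.X ^ k * t' ∧ PowerSeries.coeff 0 t' ≠ 0 := by
  have hfin : t.order < ⊤ := PowerSeries.order_finite_iff_ne_zero.mpr ht
  obtain ⟨t', ht'⟩ := PowerSeries.X_pow_order_dvd (φ := t)
  rw [← ENat.lift_eq_toNat_of_lt_top hfin] at ht'
  refine ⟨t.order.lift hfin, t', ht', ?_⟩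
  have e : PowerSeries.coeff (0 + t.order.lift hfin) (PowerSeries.X ^ t.order.lift hfin * t')
      = PowerSeries.coeff 0 t' := PowerSeries.coeff_X_pow_mul _ _ _
  rw [zero_add, ← ht'] at e
  rw [← e]
  rw [ENat.lift_eq_toNat_of_lt_top hfin]; exact PowerSeries.coeff_order ht

lemma X_not_unit : ¬ IsUnit (PowerSeries.X : Wt) := by
  intro h
  have h2 := h.map (PowerSeries.constantCoeff (R := Wb))
  rw [PowerSeries.constantCoeff_X] at h2
  exact not_isUnit_zero h2

lemma X_prime_Wt : Prime (PowerSeries.X : Wt) := by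
  refine ⟨PowerSeries.X_ne_zero, X_not_unit, ?_⟩
  intro x y hxy
  rw [PowerSeries.X_dvd_iff] at hxy ⊢
  rw [PowerSeries.X_dvd_iff]
  rw [map_mul] at hxy
  exact mul_eq_zero.mp hxy

/-- The core induction: a series whose zeroth outer coefficient is `X^n·unit` divides
any product `s * Q` with `Q` relatively prime to it only if it divides `s`. -/
theorem main_aux : ∀ n : ℕ, ∀ (P : Wt) (u : Wbˣ),
    PowerSeries.coeff 0 P = PowerSeries.X ^ n * (u : Wb) →
    ∀ Q s : Wt, IsRelPrime P Q → P ∣ s * Q → P ∣ s := by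
  intro n
  induction n using Nat.strong_induction_on with
  | _ n IH =>
    intro P u ha Q s hrp hdvd
    obtain ⟨q, r, hQ, hr⟩ := wdt_ex ha Q
    by_cases hr0 : r = 0
    · have hPQ : P ∣ Q := ⟨q, by rw [hQ, hr0, add_zero, mul_comm]⟩
      exact (hrp dvd_rfl hPQ).dvd
    · have hrpr : IsRelPrime P r := fun d hdP hdr =>
        hrp hdP (by rw [hQ]; exact dvd_add (hdP.mul_left q) hdr)
      have hPsr : P ∣ s * r := by
        have e : s * r = s * Q - s * q * P := by rw [hQ]; ring
        rw [e]
        exact dvd_sub hdvd (dvd_mul_left P (s * q))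
      obtain ⟨k, r', hk, hc0⟩ := Wt_decomp r hr0
      have hcoeffk : PowerSeries.coeff 0 r' = PowerSeries.coeff k r := by
        rw [hk]
        have e := PowerSeries.coeff_X_pow_mul r' k 0
        rw [zero_add] at e
        exact e.symm
      have hc0low : ∀ m, n ≤ m → PowerSeries.coeff m (PowerSeries.coeff 0 r') = 0 := by
        intro m hm
        rw [hcoeffk]
        exact hr k m hm
      obtain ⟨n'', w, hw, hcnz⟩ := Wb_decomp _ hc0
      have hlt : n'' < n := by
        by_contra hcon
        push_neg at hcon
        exact hcnz (hc0low n'' hcon)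
      have hrpr' : IsRelPrime P r' := fun d hdP hdr' =>
        hrpr hdP (by rw [hk]; exact hdr'.mul_left _)
      have hPsr' : P ∣ s * r' := by
        apply dvd_of_dvd_mul_X_pow ha (s * r') k
        rw [show s * r' * PowerSeries.X ^ k = s * (PowerSeries.X ^ k * r') from by ring, ← hk]
        exact hPsr
      obtain ⟨t, ht⟩ := hPsr'
      have hr't : r' ∣ t * P := ⟨s, by linear_combination -ht⟩
      have hr'dvd : r' ∣ t := IH n'' hlt r' w hw P t hrpr'.symm hr't
      obtain ⟨t', ht'⟩ := hr'dvd
      have hr'0 : r' ≠ 0 := fun hzz => hc0 (by rw [hzz, map_zero])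
      refine ⟨t', ?_⟩
      have e2 : s * r' = P * t' * r' := by rw [ht, ht']; ring
      exact mul_right_cancel₀ hr'0 e2

/-- Euclid's lemma in `ℂ⟦X⟧⟦Y⟧`. -/
theorem key_Wt (a b s : Wt) (hrp : IsRelPrime a b) (h : a ∣ s * b) : a ∣ s := by
  by_cases ha0 : a = 0
  · subst ha0
    rw [zero_dvd_iff] at h
    rcases mul_eq_zero.mp h with h' | h'
    · rw [h']
    · subst h'
      exact (hrp dvd_rfl dvd_rfl).dvd
  · obtain ⟨k, a', hk, h0⟩ := Wt_decomp a ha0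
    obtain ⟨n, u, hu, -⟩ := Wb_decomp _ h0
    have hrpa' : IsRelPrime a' b := fun d hd1 hd2 =>
      hrp (by rw [hk]; exact hd1.mul_left _) hd2
    rcases Nat.eq_zero_or_pos k with hk0 | hkpos
    · have haa : a = a' := by rw [hk, hk0, pow_zero, one_mul]
      rw [haa] at h ⊢
      exact main_aux n a' u hu b s hrpa' h
    · have hXa : (PowerSeries.X : Wt) ∣ a := by
        rw [hk]
        exact Dvd.dvd.mul_right (dvd_pow_self _ hkpos.ne') a'
      have hXnb : ¬ (PowerSeries.X : Wt) ∣ b := fun hXb =>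
        X_not_unit (hrp hXa hXb)
      have hXks : (PowerSeries.X : Wt) ^ k ∣ s :=
        X_prime_Wt.pow_dvd_of_dvd_mul_right k hXnb
          (dvd_trans (by rw [hk]; exact dvd_mul_right _ _) h)
      obtain ⟨s₁, hs₁⟩ := hXks
      obtain ⟨e, he⟩ := h
      have hXne : (PowerSeries.X : Wt) ^ k ≠ 0 := pow_ne_zero _ PowerSeries.X_ne_zero
      have ha'sb : a' ∣ s₁ * b := by
        refine ⟨e, ?_⟩
        apply mul_left_cancel₀ hXne
        rw [show PowerSeries.X ^ k * (s₁ * b) = PowerSeries.X ^ k * s₁ * b from by ring, ← hs₁]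
        rw [he, hk]
        ring
      have ha's₁ : a' ∣ s₁ := main_aux n a' u hu b s₁ hrpa' ha'sb
      rw [hs₁, hk]
      exact mul_dvd_mul_left _ ha's₁

end SaitoAux


namespace SaitoAux

/-- Euclid's lemma in `ℂ⟦x,y⟧`: if `a` and `b` are relatively prime and `a ∣ s * b`
then `a ∣ s`. -/
theorem key_PS (a b s : PS') (hrp : IsRelPrime a b) (h : a ∣ s * b) : a ∣ s := by
  have h1 : Phi a ∣ Phi s * Phi b := by
    rw [← map_mul]
    exact map_dvd Phi h
  have h2 : IsRelPrime (Phi a) (Phi b) := by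
    intro d hd1 hd2
    have e1 : Phi.symm d ∣ a := by
      have := map_dvd Phi.symm hd1
      rwa [RingEquiv.symm_apply_apply] at this
    have e2 : Phi.symm d ∣ b := by
      have := map_dvd Phi.symm hd2
      rwa [RingEquiv.symm_apply_apply] at this
    have := (hrp e1 e2).map Phi
    rwa [RingEquiv.apply_symm_apply] at this
  have h3 : Phi a ∣ Phi s := key_Wt _ _ _ h2 h1
  have h4 := map_dvd Phi.symm h3
  rwa [RingEquiv.symm_apply_apply, RingEquiv.symm_apply_apply] at h4

end SaitoAux


theorem mem_F_iff_cofactor_in_jacobian (f : PS) (hf : Squarefree f)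
    (hcop : IsRelPrime (pd 0 f) (pd 1 f))
    (A B h : PS) (hc : A * pd 1 f - B * pd 0 f = h * f) :
    (A, B) ∈ FSet f ↔ h ∈ Ideal.span {pd 0 f, pd 1 f} := by
  have hf0 : f ≠ 0 := by
    intro h0
    rw [h0] at hf
    exact not_squarefree_zero hf
  have hshape : ∀ (p : PS) (η : PS × PS),
      p • dd f + f • η = (p * pd 0 f + f * η.1, p * pd 1 f + f * η.2) := fun p η => rfl
  constructor
  · rintro ⟨p, η, hpη⟩
    rw [hshape] at hpη
    rw [Prod.ext_iff] at hpη
    obtain ⟨hA, hB⟩ := hpη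
    simp only at hA hB
    rw [Ideal.mem_span_pair]
    refine ⟨-η.2, η.1, ?_⟩
    have hcalc : (-η.2 * pd 0 f + η.1 * pd 1 f) * f = h * f := by
      rw [← hc, hA, hB]; ring
    exact mul_right_cancel₀ hf0 hcalc
  · intro hh
    rw [Ideal.mem_span_pair] at hh
    obtain ⟨u, v, huv⟩ := hh
    have hab : (A - v * f) * pd 1 f = (B + u * f) * pd 0 f := by
      linear_combination hc - f * huv
    by_cases hfx : pd 0 f = 0
    · have hyu : IsUnit (pd 1 f) := hcop (by rw [hfx]; exact dvd_zero _) dvd_rfl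
      obtain ⟨yu, hyu⟩ := hyu
      have hfy0 : pd 1 f ≠ 0 := by
        rw [← hyu]; exact yu.ne_zero
      have ha0 : A - v * f = 0 := by
        have hz : (A - v * f) * pd 1 f = 0 := by rw [hab, hfx, mul_zero]
        exact (mul_eq_zero.mp hz).resolve_right hfy0
      refine ⟨(B + u * f) * (↑yu⁻¹ : PS), (v, -u), ?_⟩
      rw [hshape, Prod.ext_iff]
      constructor
      · simp only
        rw [hfx, mul_zero, zero_add]
        linear_combination ha0
      · simp only
        rw [← hyu, show (B + u * f) * (↑yu⁻¹ : PS) * (yu : PS)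
          = (B + u * f) * ((↑yu⁻¹ : PS) * (yu : PS)) from by ring, Units.inv_mul, mul_one]
        ring
    · have hdvd : pd 0 f ∣ (A - v * f) :=
        SaitoAux.key_PS (pd 0 f) (pd 1 f) (A - v * f) hcop ⟨B + u * f, by linear_combination hab⟩
      obtain ⟨p, hp⟩ := hdvd
      have hbp : B + u * f = p * pd 1 f := by
        have e : (B + u * f) * pd 0 f = p * pd 1 f * pd 0 f := by
          rw [← hab, hp]; ring
        exact mul_right_cancel₀ hfx e
      refine ⟨p, (v, -u), ?_⟩
      rw [hshape, Prod.ext_iff]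
      constructor
      · simp only
        linear_combination hp
      · simp only
        linear_combination hbp
end
end

section
/- Let f = f₁f₂ ∈ ℂ{x,y} be reduced and let {ω₁, ω₂} be a Saito basis of S(f₁) with ω₁ ∧ ω₂ = u·f₁·dx∧dy (u a unit) and ωᵢ ∧ df₁ = hᵢ·f₁·dx∧dy. Suppose ωᵢ ∧ df₂ = (Rᵢ + Hᵢ·f₂)·dx∧dy with Rᵢ ∉ ⟨f₂⟩, let G = gcd(R₁, R₂), and suppose there exist S₁, S₂ ∈ ℂ{x,y} with S₁·(R₁/G) + S₂·(R₂/G) = v·f₂ for a unit v. Then η₁ := (R₂·ω₁ − R₁·ω₂)/G and η₂ := S₁·ω₁ + S₂·ω₂ satisfy η₁, η₂ ∈ S(f₁f₂) and η₁ ∧ η₂ = u·v·f₁f₂·dx∧dy; hence {η₁, η₂} is a Saito basis of S(f₁f₂). -/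
open MvPowerSeries

noncomputable section

lemma coeff_pd (i : Fin 2) (m : Fin 2 →₀ ℕ) (f : PS) :
    MvPowerSeries.coeff m (pd i f)
      = ((m i : ℂ) + 1) * MvPowerSeries.coeff (m + Finsupp.single i 1) f := rfl

/-- Key reindexing identity for the Leibniz rule. -/
lemma sum_shift (i : Fin 2) (m : Fin 2 →₀ ℕ) (F : (Fin 2 →₀ ℕ) → (Fin 2 →₀ ℕ) → ℂ) :
    ∑ p ∈ Finset.HasAntidiagonal.antidiagonal (m + Finsupp.single i 1),
        ((p.1 : Fin 2 →₀ ℕ) i : ℂ) * F p.1 p.2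
      = ∑ p ∈ Finset.HasAntidiagonal.antidiagonal m,
        (((p.1 : Fin 2 →₀ ℕ) i : ℂ) + 1) * F (p.1 + Finsupp.single i 1) p.2 := by
  classical
  rw [← Finset.sum_filter_add_sum_filter_not _
    (fun p : (Fin 2 →₀ ℕ) × (Fin 2 →₀ ℕ) => p.1 i = 0)]
  have h0 : ∑ p ∈ (Finset.HasAntidiagonal.antidiagonal (m + Finsupp.single i 1)).filter
      (fun p : (Fin 2 →₀ ℕ) × (Fin 2 →₀ ℕ) => p.1 i = 0),
      ((p.1 : Fin 2 →₀ ℕ) i : ℂ) * F p.1 p.2 = 0 := by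
    apply Finset.sum_eq_zero
    intro p hp
    rw [Finset.mem_filter] at hp
    rw [hp.2]
    simp
  rw [h0, zero_add]
  apply Finset.sum_nbij' (i := fun p => (p.1 - Finsupp.single i 1, p.2))
    (j := fun p => (p.1 + Finsupp.single i 1, p.2))
  · intro p hp
    rw [Finset.mem_filter, Finset.HasAntidiagonal.mem_antidiagonal] at hp
    rw [Finset.HasAntidiagonal.mem_antidiagonal]
    have hle : Finsupp.single i 1 ≤ p.1 :=
      Finsupp.single_le_iff.mpr (Nat.one_le_iff_ne_zero.mpr hp.2)
    have := hp.1
    ext j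
    by_cases hj : j = i <;>
      simp only [Finsupp.add_apply, Finsupp.tsub_apply, Finsupp.single_apply] <;>
      [skip; skip] <;>
      · have h1 := congrArg (fun x => x j) this
        have h2 := Finsupp.single_le_iff.mp hle
        simp only [Finsupp.add_apply, Finsupp.single_apply] at h1 h2 ⊢
        by_cases hji : i = j <;> simp [hji] at h1 h2 ⊢ <;> omega
  · intro p hp
    rw [Finset.HasAntidiagonal.mem_antidiagonal] at hp
    rw [Finset.mem_filter, Finset.HasAntidiagonal.mem_antidiagonal]
    constructor
    · rw [← hp]; exact add_right_comm _ _ _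
    · simp [Finsupp.add_apply, Finsupp.single_apply]
  · intro p hp
    rw [Finset.mem_filter] at hp
    have hle : Finsupp.single i 1 ≤ p.1 :=
      Finsupp.single_le_iff.mpr (Nat.one_le_iff_ne_zero.mpr hp.2)
    ext <;> simp [tsub_add_cancel_of_le hle]
  · intro p hp
    ext <;> simp
  · intro p hp
    rw [Finset.mem_filter] at hp
    have hle : (1 : ℕ) ≤ p.1 i := Nat.one_le_iff_ne_zero.mpr hp.2
    have h1 : (((p.1 - Finsupp.single i 1 : Fin 2 →₀ ℕ)) i : ℂ) + 1 = (p.1 i : ℂ) := by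
      have : ((p.1 - Finsupp.single i 1 : Fin 2 →₀ ℕ)) i = p.1 i - 1 := by
        simp [Finsupp.tsub_apply]
      rw [this, Nat.cast_sub hle]
      ring
    have h2 : p.1 - Finsupp.single i 1 + Finsupp.single i 1 = p.1 :=
      tsub_add_cancel_of_le (Finsupp.single_le_iff.mpr hle)
    rw [h1, h2]

/-- Second-component version of `sum_shift`. -/
lemma sum_shift₂ (i : Fin 2) (m : Fin 2 →₀ ℕ) (F : (Fin 2 →₀ ℕ) → (Fin 2 →₀ ℕ) → ℂ) :
    ∑ p ∈ Finset.HasAntidiagonal.antidiagonal (m + Finsupp.single i 1),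
        ((p.2 : Fin 2 →₀ ℕ) i : ℂ) * F p.1 p.2
      = ∑ p ∈ Finset.HasAntidiagonal.antidiagonal m,
        (((p.2 : Fin 2 →₀ ℕ) i : ℂ) + 1) * F p.1 (p.2 + Finsupp.single i 1) := by
  rw [Finsupp.sum_antidiagonal_swap (m + Finsupp.single i 1)
      (fun a b => ((b : Fin 2 →₀ ℕ) i : ℂ) * F a b),
    sum_shift i m (fun a b => F b a),
    ← Finsupp.sum_antidiagonal_swap m
      (fun a b => (((b : Fin 2 →₀ ℕ) i : ℂ) + 1) * F a (b + Finsupp.single i 1))]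

/-- Leibniz rule for the formal partial derivative. -/
lemma pd_mul (i : Fin 2) (f g : PS) : pd i (f * g) = pd i f * g + f * pd i g := by
  classical
  ext m
  rw [map_add, coeff_pd, MvPowerSeries.coeff_mul, MvPowerSeries.coeff_mul,
    MvPowerSeries.coeff_mul, Finset.mul_sum]
  have key : ∀ p ∈ Finset.HasAntidiagonal.antidiagonal (m + Finsupp.single i 1),
      ((m i : ℂ) + 1) * (MvPowerSeries.coeff p.1 f * MvPowerSeries.coeff p.2 g)
        = (p.1 i : ℂ) * (MvPowerSeries.coeff p.1 f * MvPowerSeries.coeff p.2 g)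
          + (p.2 i : ℂ) * (MvPowerSeries.coeff p.1 f * MvPowerSeries.coeff p.2 g) := by
    intro p hp
    rw [Finset.HasAntidiagonal.mem_antidiagonal] at hp
    have : p.1 i + p.2 i = m i + 1 := by
      have := congrArg (fun x => x i) hp
      simpa [Finsupp.add_apply, Finsupp.single_apply] using this
    have hc : (p.1 i : ℂ) + (p.2 i : ℂ) = (m i : ℂ) + 1 := by exact_mod_cast this
    rw [← hc]; ring
  rw [Finset.sum_congr rfl key, Finset.sum_add_distrib]
  congr 1
  · rw [sum_shift i m (fun a b => MvPowerSeries.coeff a f * MvPowerSeries.coeff b g)]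
    apply Finset.sum_congr rfl
    intro p hp
    rw [coeff_pd]
    ring
  · rw [sum_shift₂ i m (fun a b => MvPowerSeries.coeff a f * MvPowerSeries.coeff b g)]
    apply Finset.sum_congr rfl
    intro p hp
    rw [coeff_pd]
    ring

lemma dd_mul (f g : PS) : dd (f * g) = g • dd f + f • dd g := by
  simp only [dd, Prod.mk_add_mk, Prod.smul_mk, smul_eq_mul, Prod.mk.injEq]
  constructor <;> rw [pd_mul] <;> ring

theorem saito_basis_of_product (f₁ f₂ : PS) (hf : Squarefree (f₁ * f₂))
    (ω₁ ω₂ : PS × PS) (hω₁ : ω₁ ∈ SaitoSet f₁) (hω₂ : ω₂ ∈ SaitoSet f₁)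
    (u : PS) (hu : IsUnit u) (hbasis : wedge ω₁ ω₂ = u * f₁)
    (h₁ h₂ : PS) (e₁ : wedge ω₁ (dd f₁) = h₁ * f₁) (e₂ : wedge ω₂ (dd f₁) = h₂ * f₁)
    (R₁ R₂ H₁ H₂ : PS)
    (w₁ : wedge ω₁ (dd f₂) = R₁ + H₁ * f₂) (w₂ : wedge ω₂ (dd f₂) = R₂ + H₂ * f₂)
    (hR₁ : ¬ f₂ ∣ R₁) (hR₂ : ¬ f₂ ∣ R₂)
    (G r₁ r₂ : PS) (hGr₁ : R₁ = G * r₁) (hGr₂ : R₂ = G * r₂)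
    (hGgcd : ∀ e : PS, e ∣ R₁ → e ∣ R₂ → e ∣ G)
    (S₁ S₂ v : PS) (hv : IsUnit v) (hS : S₁ * r₁ + S₂ * r₂ = v * f₂) :
    r₂ • ω₁ - r₁ • ω₂ ∈ SaitoSet (f₁ * f₂) ∧
    S₁ • ω₁ + S₂ • ω₂ ∈ SaitoSet (f₁ * f₂) ∧
    wedge (r₂ • ω₁ - r₁ • ω₂) (S₁ • ω₁ + S₂ • ω₂) = u * v * (f₁ * f₂) := by
  simp only [wedge] at e₁ e₂ w₁ w₂ hbasis
  subst hGr₁ hGr₂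
  refine ⟨⟨r₂ * h₁ + r₂ * H₁ - r₁ * h₂ - r₁ * H₂, ?_⟩,
    ⟨S₁ * h₁ + S₁ * H₁ + S₂ * h₂ + S₂ * H₂ + G * v, ?_⟩, ?_⟩
  · rw [dd_mul]
    simp only [wedge, Prod.fst_sub, Prod.snd_sub, Prod.fst_add, Prod.snd_add,
      Prod.smul_fst, Prod.smul_snd, smul_eq_mul]
    linear_combination (r₂ * f₂) * e₁ - (r₁ * f₂) * e₂ + (r₂ * f₁) * w₁ - (r₁ * f₁) * w₂
  · rw [dd_mul]
    simp only [wedge, Prod.fst_sub, Prod.snd_sub, Prod.fst_add, Prod.snd_add,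
      Prod.smul_fst, Prod.smul_snd, smul_eq_mul]
    linear_combination (S₁ * f₂) * e₁ + (S₂ * f₂) * e₂ + (S₁ * f₁) * w₁ + (S₂ * f₁) * w₂
      + (f₁ * G) * hS
  · simp only [wedge, Prod.fst_sub, Prod.snd_sub, Prod.fst_add, Prod.snd_add,
      Prod.smul_fst, Prod.smul_snd, smul_eq_mul]
    linear_combination (r₂ * S₂ + r₁ * S₁) * hbasis + (u * f₁) * hS
end
end
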